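/- Let g be a finite-order linear automorphism of a finite-dimensional real vector space V preserving a full-rank lattice, with fixed subspace V_g of dimension δ(g). Then the value det(1 − g restricted to the orthogonal complement of V_g) = lim_{q→1} det(1 − qg)/(1−q)^{δ(g)} is a positive integer. -/

import Mathlib

open Polynomial Matrix

set_option maxHeartbeats 1000000

lemma eval_charpolyRev' {n : Type*} [Fintype n] [DecidableEq n]
    (A : Matrix n n ℝ) (t : ℝ) :
    A.charpolyRev.eval t = (1 - t • A).det := by
  unfold Matrix.charpolyRev
  rw [← Polynomial.coe_evalRingHom, RingHom.map_det]
  congr 1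
  ext i j
  simp [Matrix.one_apply, apply_ite (Polynomial.eval t)] <;> ring

lemma charpolyRev_map_int' {n : Type*} [Fintype n] [DecidableEq n] (N : Matrix n n ℤ) :
    (N.map (Int.cast : ℤ → ℝ)).charpolyRev = N.charpolyRev.map (Int.castRingHom ℝ) := by
  unfold Matrix.charpolyRev
  rw [← Polynomial.coe_mapRingHom, RingHom.map_det]
  congr 1
  ext i j
  simp [Matrix.one_apply, apply_ite (Polynomial.map (Int.castRingHom ℝ))]

lemma reverse_X_sub_one_pow' (k : ℕ) :
    ((X - 1 : ℝ[X]) ^ k).reverse = (1 - X) ^ k := by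
  have h1 : (X - 1 : ℝ[X]).reverse = 1 - X := by
    have h : (X - 1 : ℝ[X]) = X - C 1 := by simp
    rw [h, Polynomial.reverse, natDegree_X_sub_C, sub_eq_add_neg, reflect_add, reflect_neg,
      ← pow_one (X : ℝ[X]), reflect_monomial]
    simp [reflect_C, sub_eq_add_neg]
  induction k with
  | zero => simpa using Polynomial.reverse_C (1 : ℝ)
  | succ k ih =>
    rw [pow_succ, Polynomial.reverse_mul_of_domain, ih, h1, pow_succ]

/-- For a finite-order lattice-preserving endomorphism `f` with fixed space of dimension `δ`,
the value `det_{V_f^⊥}(1 - f) = lim_{q→1} det(1 - q f)/(1-q)^δ`, i.e. the evaluation at `1` of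
the polynomial `Q` with `det(1 - q f) = (1-q)^δ Q(q)`, is a positive integer. -/
theorem det_complement_pos_integer
    {V : Type*} [AddCommGroup V] [Module ℝ V] [FiniteDimensional ℝ V]
    (d : ℕ) (b : Module.Basis (Fin d) ℝ V) (f : Module.End ℝ V) (m : ℕ) (hm : 0 < m)
    (hord : orderOf f = m)
    (hL : Submodule.map (LinearMap.restrictScalars ℤ f) (Submodule.span ℤ (Set.range b)) =
      Submodule.span ℤ (Set.range b))
    (Q : Polynomial ℝ)
    (hQ : (1 - (Polynomial.X : Polynomial ℝ) •
        (LinearMap.toMatrix b b f).map Polynomial.C).det =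
      (1 - Polynomial.X) ^ (Module.finrank ℝ (LinearMap.ker (f - 1))) * Q) :
    ∃ k : ℕ, 0 < k ∧ Q.eval 1 = k := by
  classical
  set δ := Module.finrank ℝ (LinearMap.ker (f - 1)) with hδ
  have hfm : f ^ m = 1 := by rw [← hord]; exact pow_orderOf_eq_one f
  set U := LinearMap.ker (f - 1) with hU
  set W := LinearMap.range (f - 1) with hW
  -- fixed vectors
  have hfix : ∀ v ∈ U, f v = v := by
    intro v hv
    have h0 : (f - 1) v = 0 := hv
    have : f v - v = 0 := by simpa using h0
    exact sub_eq_zero.mp this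
  -- invariance
  have hUmem : ∀ x ∈ U, f x ∈ U := by
    intro x hx; rw [hfix x hx]; exact hx
  have hWmem : ∀ x ∈ W, f x ∈ W := by
    rintro x ⟨y, rfl⟩
    exact ⟨f y, by simp [LinearMap.sub_apply]⟩
  -- disjointness
  have hdisj : Disjoint U W := by
    rw [Submodule.disjoint_def]
    intro v hvU hvW
    obtain ⟨u, hu⟩ := hvW
    have hiter : ∀ i : ℕ, (f ^ i) v = v := by
      intro i
      induction i with
      | zero => simp
      | succ i ih => rw [pow_succ, Module.End.mul_apply, hfix v hvU, ih]
    have hsum0 : (∑ i ∈ Finset.range m, f ^ i) v = 0 := by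
      have hgeom : (∑ i ∈ Finset.range m, f ^ i) * (f - 1) = 0 := by
        rw [geom_sum_mul, hfm, sub_self]
      calc (∑ i ∈ Finset.range m, f ^ i) v
          = ((∑ i ∈ Finset.range m, f ^ i) * (f - 1)) u := by
            rw [Module.End.mul_apply, hu]
        _ = 0 := by rw [hgeom]; rfl
    rw [LinearMap.sum_apply] at hsum0
    simp only [hiter] at hsum0
    rw [Finset.sum_const, Finset.card_range] at hsum0
    have hms : (m : ℝ) • v = 0 := by rw [Nat.cast_smul_eq_nsmul]; exact hsum0
    have hmne : (m : ℝ) ≠ 0 := Nat.cast_ne_zero.mpr hm.ne'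
    simpa [hmne] using hms
  -- complement
  have hrank : Module.finrank ℝ W + Module.finrank ℝ U = Module.finrank ℝ V :=
    LinearMap.finrank_range_add_finrank_ker (f - 1)
  have hsup : U ⊔ W = ⊤ := by
    apply Submodule.eq_top_of_finrank_eq
    have h2 := Submodule.finrank_sup_add_finrank_inf_eq U W
    rw [hdisj.eq_bot, finrank_bot, add_zero] at h2
    omega
  have hcompl : IsCompl U W := ⟨hdisj, codisjoint_iff.mpr hsup⟩
  set e := Submodule.prodEquivOfIsCompl U W hcompl with he
  set fU := f.restrict hUmem with hfU
  set fW := f.restrict hWmem with hfW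
  have hfUid : fU = LinearMap.id := by
    ext x
    have : f (x : V) = x := hfix x x.2
    simp [hfU, LinearMap.restrict_apply, this]
  -- intertwining
  have hint : ∀ p : U × W, f (e p) = e ((fU.prodMap fW) p) := by
    rintro ⟨u, w⟩
    show f ((u : V) + (w : V)) = ((fU u : V) + (fW w : V))
    rw [map_add]
    rfl
  -- charpoly decomposition
  set bU := Module.finBasis ℝ U with hbU
  set bW := Module.finBasis ℝ W with hbW
  have hcharp : f.charpoly = fU.charpoly * fW.charpoly := by
    have h1 : LinearMap.toMatrix ((bU.prod bW).map e) ((bU.prod bW).map e) f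
        = LinearMap.toMatrix (bU.prod bW) (bU.prod bW) (fU.prodMap fW) := by
      ext i j
      rw [LinearMap.toMatrix_apply, LinearMap.toMatrix_apply, Module.Basis.map_apply, Module.Basis.map_repr]
      simp only [LinearEquiv.trans_apply]
      rw [hint ((bU.prod bW) j), LinearEquiv.symm_apply_apply]
    calc f.charpoly
        = (LinearMap.toMatrix ((bU.prod bW).map e) ((bU.prod bW).map e) f).charpoly :=
          (LinearMap.charpoly_toMatrix f _).symm
      _ = (LinearMap.toMatrix (bU.prod bW) (bU.prod bW) (fU.prodMap fW)).charpoly := by rw [h1]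
      _ = (fU.prodMap fW).charpoly := LinearMap.charpoly_toMatrix _ _
      _ = fU.charpoly * fW.charpoly := LinearMap.charpoly_prodMap fU fW
  -- charpoly of the identity part
  have hchU : fU.charpoly = (X - 1 : ℝ[X]) ^ δ := by
    rw [hfUid, ← LinearMap.charpoly_toMatrix LinearMap.id bU, LinearMap.toMatrix_id]
    have hcm : charmatrix (1 : Matrix (Fin (Module.finrank ℝ U)) (Fin (Module.finrank ℝ U)) ℝ)
        = diagonal (fun _ => (X - 1 : ℝ[X])) := by
      ext i j
      by_cases h : i = j
      · subst h
        rw [charmatrix_apply_eq, diagonal_apply_eq]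
        simp
      · rw [charmatrix_apply_ne _ _ _ h, diagonal_apply_ne _ h]
        simp [Matrix.one_apply_ne h]
    rw [Matrix.charpoly, hcm, det_diagonal, Finset.prod_const, Finset.card_univ,
      Fintype.card_fin]
  set R := fW.charpoly with hR
  -- Q equals the reverse of R
  have hQ' : (LinearMap.toMatrix b b f).charpolyRev = (1 - X) ^ δ * Q := hQ
  have hrev : (LinearMap.toMatrix b b f).charpolyRev = (1 - X) ^ δ * R.reverse := by
    rw [← Matrix.reverse_charpoly, LinearMap.charpoly_toMatrix, hcharp, hchU,
      Polynomial.reverse_mul_of_domain, reverse_X_sub_one_pow']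
  have hone_sub_ne : ((1 : ℝ[X]) - X) ≠ 0 := by
    intro h
    have := congrArg (fun p => Polynomial.coeff p 1) h
    simp [Polynomial.coeff_one] at this
  have hQR : Q = R.reverse := by
    have := hQ'.symm.trans hrev
    exact mul_left_cancel₀ (pow_ne_zero _ hone_sub_ne) this
  -- matrix of fW
  set A := LinearMap.toMatrix bW bW fW with hA
  have hQA : Q = A.charpolyRev := by
    rw [hQR, hR, ← LinearMap.charpoly_toMatrix fW bW, Matrix.reverse_charpoly]
  -- fW has finite order
  have hfWm : fW ^ m = 1 := by
    ext x
    rw [hfW, Module.End.pow_restrict]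
    simp [LinearMap.restrict_apply, hfm]
  have hAm : A ^ m = 1 := by
    rw [hA, LinearMap.toMatrix_pow, hfWm, LinearMap.toMatrix_one]
  -- no nonzero fixed vector for A
  have hker1 : ∀ v : Fin (Module.finrank ℝ W) → ℝ, A *ᵥ v = v → v = 0 := by
    intro v hv
    set x : W := bW.repr.symm (Finsupp.equivFunOnFinite.symm v) with hx
    have hrx : ⇑(bW.repr x) = v := by
      rw [hx, LinearEquiv.apply_symm_apply]
      exact Finsupp.equivFunOnFinite.apply_symm_apply v
    have h2 : ⇑(bW.repr (fW x)) = v := by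
      have h3 := LinearMap.toMatrix_mulVec_repr bW bW fW x
      rw [hrx] at h3
      rw [← h3, ← hA, hv]
    have hfx : fW x = x :=
      bW.repr.injective (DFunLike.coe_injective (h2.trans hrx.symm))
    have hxU : (x : V) ∈ U := by
      have : f (x : V) = x := congrArg Subtype.val hfx
      show (x:V) ∈ LinearMap.ker (f - 1)
      simp [LinearMap.sub_apply, this]
    have hx0 : (x : V) = 0 := (Submodule.disjoint_def.mp hdisj) _ hxU x.2
    have : x = 0 := Subtype.ext hx0
    rw [← hrx, this]
    simp
  -- nonvanishing of `eval t Q` on [0,1]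
  have hne : ∀ t ∈ Set.Icc (0:ℝ) 1, A.charpolyRev.eval t ≠ 0 := by
    intro t ht h0
    rw [eval_charpolyRev'] at h0
    obtain ⟨v, hv0, hv⟩ := (Matrix.exists_mulVec_eq_zero_iff).mpr h0
    have hveq : ((t • A)) *ᵥ v = v := by
      rw [Matrix.sub_mulVec, Matrix.one_mulVec, sub_eq_zero] at hv
      exact hv.symm
    have hvm : ∀ k : ℕ, ((t • A) ^ k) *ᵥ v = v := by
      intro k
      induction k with
      | zero => simp
      | succ k ih => rw [pow_succ, ← Matrix.mulVec_mulVec, hveq, ih]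
    have hvt : t ^ m • v = v := by
      have := hvm m
      rwa [_root_.smul_pow, hAm, Matrix.smul_mulVec, Matrix.one_mulVec] at this
    rcases lt_or_eq_of_le ht.2 with hlt | heq
    · have htm : t ^ m < 1 := pow_lt_one₀ ht.1 hlt hm.ne'
      have : (t ^ m - 1) • v = 0 := by rw [sub_smul, one_smul, hvt, sub_self]
      have hvz : v = 0 := by
        rcases smul_eq_zero.mp this with h | h
        · exact absurd h (by intro hh; nlinarith [sub_eq_zero.mp (by linarith : t^m - 1 = 0)])
        · exact h
      exact hv0 hvz
    · subst heq
      have : A *ᵥ v = v := by simpa using hveq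
      exact hv0 (hker1 v this)
  -- positivity via continuity
  have heval0 : A.charpolyRev.eval 0 = 1 := by
    rw [eval_charpolyRev']; simp
  have hpos : 0 < A.charpolyRev.eval 1 := by
    rcases (hne 1 ⟨zero_le_one, le_refl 1⟩).lt_or_gt with hlt | hgt
    · exfalso
      have hcont : ContinuousOn (fun x => A.charpolyRev.eval x) (Set.Icc (0:ℝ) 1) :=
        (Polynomial.continuous _).continuousOn
      have hmem : (0:ℝ) ∈ Set.Icc (A.charpolyRev.eval 1) (A.charpolyRev.eval 0) :=
        ⟨hlt.le, by rw [heval0]; exact zero_le_one⟩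
      obtain ⟨c, hc, hc0⟩ := intermediate_value_Icc' zero_le_one hcont hmem
      exact hne c hc hc0
    · exact hgt
  have hQpos : 0 < Q.eval 1 := by rw [hQA]; exact hpos
  -- integrality
  have hMint : ∀ i j, (LinearMap.toMatrix b b f) i j ∈ Set.range (algebraMap ℤ ℝ) := by
    intro i j
    rw [LinearMap.toMatrix_apply]
    have hb : f (b j) ∈ Submodule.span ℤ (Set.range ⇑b) := by
      rw [← hL]
      exact Submodule.mem_map_of_mem (Submodule.subset_span (Set.mem_range_self j))
    exact (b.mem_span_iff_repr_mem ℤ _).mp hb i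
  choose N hN using fun i j => hMint i j
  have hMN : LinearMap.toMatrix b b f = (Matrix.of N).map (Int.cast : ℤ → ℝ) := by
    ext i j
    rw [Matrix.map_apply, ← hN i j]
    rfl
  set P₀ := (Matrix.of N).charpolyRev with hP₀
  have hPmap : P₀.map (Int.castRingHom ℝ) = (1 - X) ^ δ * Q := by
    rw [← charpolyRev_map_int', ← hMN, hQ']
  have hsign : ((1:ℝ[X]) - X) ^ δ = (X - 1) ^ δ * (-1) ^ δ := by
    rw [← mul_pow]; congr 1; ring
  have hfact : P₀.map (Int.castRingHom ℝ) = (X - 1 : ℝ[X]) ^ δ * ((-1) ^ δ * Q) := by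
    rw [hPmap, hsign, mul_assoc]
  have hmonicZ : ((X - 1 : ℤ[X]) ^ δ).Monic := by
    simpa using (monic_X_sub_C (1:ℤ)).pow δ
  have hmonicR : ((X - 1 : ℝ[X]) ^ δ).Monic := by
    simpa using (monic_X_sub_C (1:ℝ)).pow δ
  have hmapd : ((X - 1 : ℤ[X]) ^ δ).map (Int.castRingHom ℝ) = (X - 1 : ℝ[X]) ^ δ := by
    simp
  have hdiv : (P₀ /ₘ ((X - 1) ^ δ)).map (Int.castRingHom ℝ) = (-1 : ℝ[X]) ^ δ * Q := by
    rw [Polynomial.map_divByMonic _ hmonicZ, hmapd, hfact,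
      Polynomial.mul_divByMonic_cancel_left _ hmonicR]
  set z := (P₀ /ₘ ((X - 1) ^ δ)).eval 1 with hz
  have hQ1 : Q.eval 1 = (((-1) ^ δ * z : ℤ) : ℝ) := by
    have h := congrArg (Polynomial.eval (1:ℝ)) hdiv
    rw [Polynomial.eval_one_map] at h
    rw [eval_mul, eval_pow, eval_neg, eval_one] at h
    rw [← hz, eq_intCast] at h
    push_cast
    rcases Nat.even_or_odd δ with hev | hod
    · rw [hev.neg_one_pow] at h ⊢
      simpa using h.symm
    · rw [hod.neg_one_pow] at h ⊢
      linarith [h]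
  -- conclusion
  set n : ℤ := (-1) ^ δ * z with hn
  have hnpos : 0 < n := by
    have h0 : (0:ℝ) < (n:ℝ) := by rw [← hQ1]; exact hQpos
    exact_mod_cast h0
  refine ⟨n.toNat, by omega, ?_⟩
  rw [hQ1]
  rw [show ((n.toNat : ℕ) : ℝ) = ((n.toNat : ℤ) : ℝ) by push_cast; ring]
  rw [Int.toNat_of_nonneg hnpos.le]
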